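/- (Verifiability of scheme A.) Fix a prime q and Δ0, Δ1 ∈ F_{q^t} with Δ0 ≠ 0. Choose u1, u2 uniformly at random with u1 ≠ u2 from F_q \ {0}, and independently ũ1 ≠ ũ2 from F_q \ {0}. Let a = u2/(u2-u1) and ã = ũ2/(ũ2-ũ1). Then Pr[a·Δ0 = ã·Δ1] ≤ 2(q-1)/(q-2)^2. -/

import Mathlib

/-- Ordered pairs of distinct nonzero elements of F_q. -/
def distinctNonzeroPairs (q : ℕ) [NeZero q] : Finset (ZMod q × ZMod q) :=
  ((Finset.univ \ {0} : Finset (ZMod q)) ×ˢ (Finset.univ \ {0} : Finset (ZMod q))).filter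
    (fun u => u.1 ≠ u.2)

lemma dnp_card (q : ℕ) [NeZero q] :
    (distinctNonzeroPairs q).card = (q - 1) * (q - 2) := by
  have h : distinctNonzeroPairs q = (Finset.univ \ {0} : Finset (ZMod q)).offDiag := by
    ext ⟨a, b⟩
    simp [distinctNonzeroPairs, Finset.mem_offDiag]
    tauto
  have hc : (Finset.univ \ {0} : Finset (ZMod q)).card = q - 1 := by
    rw [Finset.card_sdiff_of_subset (by simp)]
    simp [ZMod.card]
  rw [h, Finset.offDiag_card, hc]
  have hq : 1 ≤ q := Nat.one_le_iff_ne_zero.mpr (NeZero.ne q)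
  obtain ⟨m, rfl⟩ : ∃ m, q = m + 1 := ⟨q - 1, by omega⟩
  simp [Nat.add_sub_cancel]
  cases m with
  | zero => simp
  | succ k => simp [Nat.succ_sub_one]; ring_nf; omega

lemma dnp_mem {q : ℕ} [NeZero q] {u : ZMod q × ZMod q} (h : u ∈ distinctNonzeroPairs q) :
    u.1 ≠ 0 ∧ u.2 ≠ 0 ∧ u.1 ≠ u.2 := by
  simp [distinctNonzeroPairs] at h; tauto

lemma count_le (q : ℕ) [Fact q.Prime] (K : Type*) [Field K] [Algebra (ZMod q) K] [DecidableEq K]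
    (Δ0 Δ1 : K) (hΔ0 : Δ0 ≠ 0) :
    (((distinctNonzeroPairs q ×ˢ distinctNonzeroPairs q).filter
        (fun ω =>
          let u1 := ω.1.1; let u2 := ω.1.2; let ut1 := ω.2.1; let ut2 := ω.2.2
          algebraMap (ZMod q) K (u2 / (u2 - u1)) * Δ0
            = algebraMap (ZMod q) K (ut2 / (ut2 - ut1)) * Δ1)).card)
      ≤ (distinctNonzeroPairs q).card * (q - 1) := by
  have hcard : ((distinctNonzeroPairs q) ×ˢ (Finset.univ \ {0} : Finset (ZMod q))).card
      = (distinctNonzeroPairs q).card * (q - 1) := by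
    rw [Finset.card_product, Finset.card_sdiff_of_subset (by simp)]
    simp [ZMod.card]
  rw [← hcard]
  apply Finset.card_le_card_of_injOn (fun ω => (ω.2, ω.1.2))
  · intro ω hω
    rw [Finset.mem_coe, Finset.mem_filter, Finset.mem_product] at hω
    obtain ⟨⟨h1, h2⟩, _⟩ := hω
    rw [Finset.mem_coe, Finset.mem_product]
    exact ⟨h2, by simpa using (dnp_mem h1).2.1⟩
  · intro ω hω ω' hω' heq
    simp only [Finset.coe_filter, Set.mem_setOf_eq, Finset.mem_product] at hω hω'
    obtain ⟨⟨h1, h2⟩, he⟩ := hω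
    obtain ⟨⟨h1', h2'⟩, he'⟩ := hω'
    obtain ⟨e2, e12⟩ := Prod.mk.injEq _ _ _ _ ▸ heq
    obtain ⟨hu1, hu2, hu12⟩ := dnp_mem h1
    obtain ⟨hu1', hu2', hu12'⟩ := dnp_mem h1'
    -- equations
    have key : algebraMap (ZMod q) K (ω.1.2 / (ω.1.2 - ω.1.1)) * Δ0
        = algebraMap (ZMod q) K (ω'.1.2 / (ω'.1.2 - ω'.1.1)) * Δ0 := by
      rw [he, he', e2]
    have key2 : (ω.1.2 / (ω.1.2 - ω.1.1)) = (ω'.1.2 / (ω'.1.2 - ω'.1.1)) := by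
      have := mul_right_cancel₀ hΔ0 key
      exact (algebraMap (ZMod q) K).injective this
    rw [e12] at key2
    have hd : ω.1.2 - ω.1.1 ≠ 0 := sub_ne_zero.mpr (Ne.symm hu12)
    have hd' : ω'.1.2 - ω'.1.1 ≠ 0 := by
      rw [← e12]; exact sub_ne_zero.mpr (fun h => hu12' (by rw [← e12, h]))
    rw [e12] at hd
    have hden : ω'.1.2 - ω.1.1 = ω'.1.2 - ω'.1.1 := by
      rw [div_eq_div_iff hd hd'] at key2
      exact (mul_left_cancel₀ hu2' key2).symm
    have hu : ω.1.1 = ω'.1.1 := by linear_combination -hden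
    ext <;> simp [e2, e12, hu]

/-- Verifiability of scheme A: over uniform ordered pairs of distinct nonzero
evaluation points, the probability that a·Δ0 = ã·Δ1 is at most 2(q-1)/(q-2)². -/
theorem schemeA_verifiable
    (q : ℕ) [Fact q.Prime] (K : Type*) [Field K] [Algebra (ZMod q) K] [DecidableEq K]
    (Δ0 Δ1 : K) (hΔ0 : Δ0 ≠ 0) :
    (((distinctNonzeroPairs q ×ˢ distinctNonzeroPairs q).filter
        (fun ω =>
          let u1 := ω.1.1; let u2 := ω.1.2; let ut1 := ω.2.1; let ut2 := ω.2.2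
          algebraMap (ZMod q) K (u2 / (u2 - u1)) * Δ0
            = algebraMap (ZMod q) K (ut2 / (ut2 - ut1)) * Δ1)).card : ℝ)
      / ((distinctNonzeroPairs q ×ˢ distinctNonzeroPairs q).card : ℝ)
      ≤ 2 * ((q : ℝ) - 1) / ((q : ℝ) - 2) ^ 2 := by
  have hq2 : 2 ≤ q := (Fact.out : q.Prime).two_le
  have hC := count_le q K Δ0 Δ1 hΔ0
  have hN := dnp_card q
  rcases eq_or_lt_of_le hq2 with hq | hq3
  · -- q = 2 : everything degenerates to 0 ≤ 0
    subst hq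
    have hz : (distinctNonzeroPairs 2).card = 0 := by rw [hN]
    rw [Finset.card_product, hz]
    norm_num
  · -- q ≥ 3
    have hq3' : 3 ≤ q := hq3
    have hx : (3 : ℝ) ≤ (q : ℝ) := by exact_mod_cast hq3'
    set x : ℝ := (q : ℝ) with hxdef
    have hNr : ((distinctNonzeroPairs q).card : ℝ) = (x - 1) * (x - 2) := by
      rw [hN]
      push_cast [Nat.cast_sub (by omega : 1 ≤ q), Nat.cast_sub (by omega : 2 ≤ q)]
      ring
    have hCr : ((((distinctNonzeroPairs q ×ˢ distinctNonzeroPairs q).filter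
        (fun ω =>
          let u1 := ω.1.1; let u2 := ω.1.2; let ut1 := ω.2.1; let ut2 := ω.2.2
          algebraMap (ZMod q) K (u2 / (u2 - u1)) * Δ0
            = algebraMap (ZMod q) K (ut2 / (ut2 - ut1)) * Δ1)).card : ℝ))
        ≤ (x - 1) * (x - 2) * (x - 1) := by
      calc _ ≤ (((distinctNonzeroPairs q).card * (q - 1) : ℕ) : ℝ) := by exact_mod_cast hC
        _ = (x - 1) * (x - 2) * (x - 1) := by
            push_cast [Nat.cast_sub (by omega : 1 ≤ q), hNr]
            ring
    have key : ∀ C : ℝ, 0 ≤ C → C ≤ (x - 1) * (x - 2) * (x - 1) →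
        C / ((x - 1) * (x - 2) * ((x - 1) * (x - 2))) ≤ 2 * (x - 1) / (x - 2) ^ 2 := by
      intro C hC0 hCle
      rw [div_le_div_iff₀ (by nlinarith) (by nlinarith)]
      nlinarith [mul_le_mul_of_nonneg_right hCle (sq_nonneg (x - 2)),
        (by positivity : (0 : ℝ) ≤ (x - 1) ^ 2 * (x - 2) ^ 2 * x)]
    rw [Finset.card_product]
    push_cast [hNr] at hCr ⊢
    exact key _ (by positivity) hCr
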